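/- Let H be a Hilbert space, P, P* orthogonal projections onto closed subspaces, and set P̃* = I − P*. If ‖P − P*‖ < 1, then the operator I − P̃*(P − P*) is invertible on H, and S = (I − P̃*(P − P*))⁻¹ P̃*(P − P*) satisfies ‖S‖ ≤ ‖P − P*‖/(1 − ‖P − P*‖). Moreover the map v ↦ P̃(I + S)v, restricted to ran P̃*, is a bounded inverse of the map ψ ↦ P̃* ψ from ran P̃ to ran P̃*, where P̃ = I − P. -/

import Mathlib

open ContinuousLinearMap

/-- A self-adjoint idempotent continuous linear map is a contraction pointwise. -/
lemma contraction_of_idem_sa {𝕜 : Type*} [RCLike 𝕜] {H : Type*} [NormedAddCommGroup H]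
    [InnerProductSpace 𝕜 H] [CompleteSpace H] (Q : H →L[𝕜] H)
    (hidem : IsIdempotentElem Q) (hsa : IsSelfAdjoint Q) (x : H) : ‖Q x‖ ≤ ‖x‖ := by
  rcases eq_or_ne (Q x) 0 with h | h
  · simp [h, norm_nonneg]
  have key : (‖Q x‖ : ℝ) ^ 2 = RCLike.re (inner 𝕜 (Q x) x : 𝕜) := by
    have h1 : (inner 𝕜 (Q x) (Q x) : 𝕜) = inner 𝕜 (Q x) x := by
      have := ContinuousLinearMap.adjoint_inner_left Q x (Q x)
      rw [isSelfAdjoint_iff'.mp hsa] at this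
      rw [← this]
      have : Q (Q x) = Q x := by
        have := hidem
        unfold IsIdempotentElem at this
        calc Q (Q x) = (Q * Q) x := rfl
          _ = Q x := by rw [this]
      rw [this]
    have h2 : RCLike.re (inner 𝕜 (Q x) (Q x) : 𝕜) = ‖Q x‖ ^ 2 := by
      rw [← @inner_self_eq_norm_sq 𝕜]
    rw [← h2, h1]
  have h3 : RCLike.re (inner 𝕜 (Q x) x : 𝕜) ≤ ‖Q x‖ * ‖x‖ := by
    calc RCLike.re (inner 𝕜 (Q x) x : 𝕜) ≤ ‖(inner 𝕜 (Q x) x : 𝕜)‖ := RCLike.re_le_norm _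
      _ ≤ ‖Q x‖ * ‖x‖ := norm_inner_le_norm _ _
  have h4 : (‖Q x‖ : ℝ) ^ 2 ≤ ‖Q x‖ * ‖x‖ := key ▸ h3
  have hpos : (0:ℝ) < ‖Q x‖ := norm_pos_iff.mpr h
  nlinarith

/-- Inversion of the projection change of variables: if `‖P − P*‖ < 1` then
`I − P̃*(P − P*)` is invertible, `S = (I − P̃*(P − P*))⁻¹ P̃*(P − P*)` satisfies the norm
bound `‖S‖ ≤ ‖P − P*‖/(1 − ‖P − P*‖)`, and `v ↦ P̃(I+S)v` inverts `ψ ↦ P̃*ψ` between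
`ran P̃` and `ran P̃*`. -/
theorem stmt17 {𝕜 : Type*} [RCLike 𝕜] {H : Type*} [NormedAddCommGroup H]
    [InnerProductSpace 𝕜 H] [CompleteSpace H]
    (P Ps : H →L[𝕜] H)
    (hPidem : IsIdempotentElem P) (hPsidem : IsIdempotentElem Ps)
    (hPsa : IsSelfAdjoint P) (hPssa : IsSelfAdjoint Ps)
    (hsmall : ‖P - Ps‖ < 1) :
    IsUnit (1 - (1 - Ps) * (P - Ps)) ∧
    ∀ S : H →L[𝕜] H,
      S = Ring.inverse (1 - (1 - Ps) * (P - Ps)) * ((1 - Ps) * (P - Ps)) →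
      ‖S‖ ≤ ‖P - Ps‖ / (1 - ‖P - Ps‖) ∧
      (∀ ψ : H, P ψ = 0 → (1 - P) ((1 + S) ((1 - Ps) ψ)) = ψ) ∧
      (∀ v : H, Ps v = 0 → (1 - Ps) ((1 - P) ((1 + S) v)) = v) := by
  set D : H →L[𝕜] H := P - Ps with hD
  set A : H →L[𝕜] H := (1 - Ps) * D with hA
  -- Qs := 1 - Ps is a self-adjoint idempotent, hence a contraction
  have hQs_idem : IsIdempotentElem (1 - Ps : H →L[𝕜] H) := hPsidem.one_sub
  have hQs_sa : IsSelfAdjoint (1 - Ps : H →L[𝕜] H) :=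
    (IsSelfAdjoint.one (R := H →L[𝕜] H)).sub hPssa
  have hQscontr : ∀ x : H, ‖(1 - Ps : H →L[𝕜] H) x‖ ≤ ‖x‖ := fun x =>
    contraction_of_idem_sa _ hQs_idem hQs_sa x
  have hPsPs : ∀ y : H, Ps (Ps y) = Ps y := fun y => by
    rw [← ContinuousLinearMap.mul_apply, hPsidem]
  have hPP : ∀ y : H, P (P y) = P y := fun y => by
    rw [← ContinuousLinearMap.mul_apply, hPidem]
  have hAle : ‖A‖ ≤ ‖D‖ := by
    refine ContinuousLinearMap.opNorm_le_bound _ (norm_nonneg _) (fun x => ?_)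
    calc ‖A x‖ = ‖(1 - Ps : H →L[𝕜] H) (D x)‖ := rfl
      _ ≤ ‖D x‖ := hQscontr _
      _ ≤ ‖D‖ * ‖x‖ := D.le_opNorm x
  have hAlt : ‖A‖ < 1 := lt_of_le_of_lt hAle hsmall
  set u : (H →L[𝕜] H)ˣ := Units.oneSub A hAlt with hu
  have huval : (u : H →L[𝕜] H) = 1 - A := rfl
  have hunit : IsUnit (1 - A) := ⟨u, rfl⟩
  refine ⟨hunit, fun S hS => ?_⟩
  have hinv : Ring.inverse (1 - A) = ((u⁻¹ : (H →L[𝕜] H)ˣ) : H →L[𝕜] H) :=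
    NormedRing.inverse_one_sub A hAlt
  have hSu : S = ((u⁻¹ : (H →L[𝕜] H)ˣ) : H →L[𝕜] H) * A := by rw [hS, hinv]
  -- (1 - A) * (1 + S) = 1
  have key1 : (1 - A) * S = A := by
    rw [hSu, ← mul_assoc, ← huval, u.mul_inv, one_mul]
  have h1 : (1 - A) * (1 + S) = 1 := by
    rw [mul_add, mul_one, key1]; abel
  -- (1 + S) * (1 - A) = 1
  have hAcomm : A * (1 - A) = (1 - A) * A := by noncomm_ring
  have key2 : S * (1 - A) = A := by
    rw [hSu, mul_assoc, hAcomm, ← mul_assoc, ← huval, u.inv_mul, one_mul]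
  have h2 : (1 + S) * (1 - A) = 1 := by
    rw [add_mul, one_mul, key2]; abel
  -- norm bound: S = A + S * A
  have hSA : S = A + S * A := by
    have h := h2
    rw [add_mul, one_mul, mul_sub, mul_one] at h
    calc S = (1 - A + (S - S * A)) - 1 + A + S * A := by abel
      _ = A + S * A := by rw [h]; abel
  have hnormS : ‖S‖ ≤ ‖P - Ps‖ / (1 - ‖P - Ps‖) := by
    have hb : ‖S‖ ≤ ‖A‖ + ‖S‖ * ‖A‖ := by
      calc ‖S‖ = ‖A + S * A‖ := by rw [← hSA]
        _ ≤ ‖A‖ + ‖S * A‖ := norm_add_le _ _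
        _ ≤ ‖A‖ + ‖S‖ * ‖A‖ := by gcongr; exact norm_mul_le _ _
    have h1A : (0:ℝ) < 1 - ‖A‖ := by linarith
    have hSb : ‖S‖ ≤ ‖A‖ / (1 - ‖A‖) := by
      rw [le_div_iff₀ h1A]; nlinarith
    have h1D : (0:ℝ) < 1 - ‖P - Ps‖ := by linarith
    calc ‖S‖ ≤ ‖A‖ / (1 - ‖A‖) := hSb
      _ ≤ ‖P - Ps‖ / (1 - ‖P - Ps‖) := by
          apply div_le_div₀ (norm_nonneg _) hAle h1D
          linarith
  refine ⟨hnormS, ?_, ?_⟩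
  · -- first identity
    intro ψ hψ
    set φ : H := (1 + S) ((1 - Ps) ψ) with hφ
    have hinvφ : (1 - A) φ = (1 - Ps) ψ := by
      calc (1 - A) φ = ((1 - A) * (1 + S)) ((1 - Ps) ψ) := rfl
        _ = (1 - Ps) ψ := by rw [h1]; rfl
    -- expand: φ - (1 - Ps) (D φ) = (1 - Ps) ψ
    have hexp : φ - (1 - Ps) (D φ) = (1 - Ps) ψ := by
      have : (1 - A) φ = φ - (1 - Ps) (D φ) := by
        simp [hA, ContinuousLinearMap.sub_apply, ContinuousLinearMap.mul_apply,
          ContinuousLinearMap.one_apply]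
      rw [← this]; exact hinvφ
    set x : H := (1 - P) φ - ψ with hx
    have hPx : P x = 0 := by
      simp [hx, ContinuousLinearMap.sub_apply, ContinuousLinearMap.one_apply,
        map_sub, hPP, hψ]
    have hQsx : (1 - Ps) x = 0 := by
      have e1 : (1 - Ps) x = (1 - Ps) φ - (1 - Ps) (P φ) - (1 - Ps) ψ := by
        simp only [hx, map_sub, ContinuousLinearMap.sub_apply, ContinuousLinearMap.one_apply]
      have e2 : (1 - Ps) ψ = φ - (1 - Ps) (P φ) := by
        rw [← hexp]
        congr 1
        have : D φ = P φ - Ps φ := by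
          simp [hD, ContinuousLinearMap.sub_apply]
        rw [this, map_sub]
        have : (1 - Ps) (Ps φ) = 0 := by
          simp [ContinuousLinearMap.sub_apply, ContinuousLinearMap.one_apply, hPsPs]
        rw [this, sub_zero]
      have e3 : (1 - Ps) x = (1 - Ps) φ - φ := by rw [e1, e2]; abel
      have e4 : (1 - Ps) ((1 - Ps) x) = (1 - Ps) x := by
        calc (1 - Ps) ((1 - Ps) x) = ((1 - Ps) * (1 - Ps)) x := rfl
          _ = (1 - Ps) x := by rw [hQs_idem]
      have e5 : (1 - Ps) ((1 - Ps) φ - φ) = 0 := by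
        rw [map_sub]
        have : (1 - Ps) ((1 - Ps) φ) = (1 - Ps) φ := by
          calc (1 - Ps) ((1 - Ps) φ) = ((1 - Ps) * (1 - Ps)) φ := rfl
            _ = (1 - Ps) φ := by rw [hQs_idem]
        rw [this, sub_self]
      rw [← e4, e3, e5]
    -- x = Ps x and P x = 0 so x = (Ps - P) x, hence ‖x‖ ≤ ‖P - Ps‖ ‖x‖
    have hx_eq : x = (Ps - P) x := by
      have h5 : Ps x = x := by
        have : x - Ps x = (1 - Ps) x := by
          simp [ContinuousLinearMap.sub_apply, ContinuousLinearMap.one_apply]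
        have h6 : x - Ps x = 0 := by rw [this, hQsx]
        exact (sub_eq_zero.mp h6).symm
      simp [ContinuousLinearMap.sub_apply, hPx, h5]
    have hxnorm : ‖x‖ ≤ ‖P - Ps‖ * ‖x‖ := by
      calc ‖x‖ = ‖(Ps - P) x‖ := by rw [← hx_eq]
        _ ≤ ‖Ps - P‖ * ‖x‖ := (Ps - P).le_opNorm x
        _ = ‖P - Ps‖ * ‖x‖ := by rw [norm_sub_rev]
    have hx0 : x = 0 := by
      by_contra h
      have : (0:ℝ) < ‖x‖ := norm_pos_iff.mpr h
      nlinarith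
    have : (1 - P) φ = ψ := by
      have := sub_eq_zero.mp hx0
      exact this
    exact this
  · -- second identity
    intro v hv
    set φ : H := (1 + S) v with hφ
    have hinvφ : (1 - A) φ = v := by
      calc (1 - A) φ = ((1 - A) * (1 + S)) v := rfl
        _ = v := by rw [h1]; rfl
    have hexp : φ - (1 - Ps) (P φ) = v := by
      have e : (1 - A) φ = φ - (1 - Ps) (P φ) := by
        have hDφ : D φ = P φ - Ps φ := by
          simp [hD, ContinuousLinearMap.sub_apply]
        have hz : (1 - Ps) (Ps φ) = 0 := by
          simp [ContinuousLinearMap.sub_apply, ContinuousLinearMap.one_apply, hPsPs]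
        simp only [hA, ContinuousLinearMap.sub_apply, ContinuousLinearMap.mul_apply,
          ContinuousLinearMap.one_apply, hD, map_sub]
        rw [hPsPs]
        abel
      rw [← e]; exact hinvφ
    have hPsφ : Ps φ = 0 := by
      have : Ps v = Ps φ - Ps ((1 - Ps) (P φ)) := by
        rw [← hexp, map_sub]
      have hz : Ps ((1 - Ps) (P φ)) = 0 := by
        simp [ContinuousLinearMap.sub_apply, ContinuousLinearMap.one_apply, map_sub, hPsPs]
      rw [hz, sub_zero] at this
      rw [← this, hv]
    calc (1 - Ps) ((1 - P) φ)
        = (1 - Ps) φ - (1 - Ps) (P φ) := by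
          simp [ContinuousLinearMap.sub_apply, ContinuousLinearMap.one_apply, map_sub]
      _ = φ - (1 - Ps) (P φ) := by
          have : (1 - Ps) φ = φ := by
            simp [ContinuousLinearMap.sub_apply, ContinuousLinearMap.one_apply, hPsφ]
          rw [this]
      _ = v := hexp
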